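/- Let C be a Hamiltonian cycle of a graph G of order n ≥ 5 with vertices v_1,...,v_n in cyclic order, and suppose G has three chords v_{i_1}v_{j_1}, v_{i_2}v_{j_2}, v_{i_3}v_{j_3} with 1 ≤ i_1 < i_2 < i_3 < j_1 < j_2 < j_3 ≤ n (pairwise crossing). Then G has an orientation of diameter at most n - 2. -/

import Mathlib

open SimpleGraph

/-- `R` is an orientation of the simple graph `G`: every arc of `R` lies on an edge of `G`,
and every edge of `G` receives exactly one of its two possible directions. -/
def IsOrientation {V : Type*} (G : SimpleGraph V) (R : V → V → Prop) : Prop :=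
  (∀ u v, R u v → G.Adj u v) ∧ ∀ u v, G.Adj u v → (R u v ↔ ¬ R v u)

/-- `RelPow R k u v` : there is a directed walk of length `k` from `u` to `v`. -/
def RelPow {V : Type*} (R : V → V → Prop) : ℕ → V → V → Prop
  | 0, u, v => u = v
  | n + 1, u, v => ∃ w, R u w ∧ RelPow R n w v

/-- The digraph `R` has diameter at most `d`: any vertex can reach any other by a
directed walk of length at most `d`. -/
def DiamLE {V : Type*} (R : V → V → Prop) (d : ℕ) : Prop :=
  ∀ u v, ∃ k ≤ d, RelPow R k u v

/-- A digraph is strongly connected if every vertex can reach every other. -/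
def StronglyConnected {V : Type*} (R : V → V → Prop) : Prop :=
  ∀ u v, Relation.ReflTransGen R u v

/-- A graph is bridgeless if it is connected and contains no bridge. -/
def Bridgeless {V : Type*} (G : SimpleGraph V) : Prop :=
  G.Connected ∧ ∀ e, ¬ G.IsBridge e

/-- The graph `G_{n,d}`: the path `u_1 … u_d` is the set of indices `0,…,d-1`,
the clique `K_{n-d-1}` is the set of indices `d,…,n-2`, both endpoints `0` and `d-1`
of the path are joined to all clique vertices, and the extra vertex `u_3'` is the
index `n-1`, joined to `u_2, u_3, u_4`, i.e. to indices `1, 2, 3`. -/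
def Gnd (n d : ℕ) : SimpleGraph (Fin n) :=
  SimpleGraph.fromRel (fun i j =>
    ((i : ℕ) + 1 = (j : ℕ) ∧ (j : ℕ) < d) ∨
    (d ≤ (i : ℕ) ∧ (i : ℕ) < n - 1 ∧ d ≤ (j : ℕ) ∧ (j : ℕ) < n - 1) ∨
    (((i : ℕ) = 0 ∨ (i : ℕ) = d - 1) ∧ d ≤ (j : ℕ) ∧ (j : ℕ) < n - 1) ∨
    ((i : ℕ) = n - 1 ∧ ((j : ℕ) = 1 ∨ (j : ℕ) = 2 ∨ (j : ℕ) = 3)))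

/-- The graph `H_{n,n-2}`: the cycle `u_1 … u_{n-1} u_1` is the set of indices
`0,…,n-2` in cyclic order, and the extra vertex `u_3'` is the index `n-1`,
joined to `u_2, u_3, u_4`, i.e. to indices `1, 2, 3`. -/
def Hgraph (n : ℕ) : SimpleGraph (Fin n) :=
  SimpleGraph.fromRel (fun i j =>
    ((i : ℕ) + 1 = (j : ℕ) ∧ (j : ℕ) ≤ n - 2) ∨
    ((i : ℕ) = 0 ∧ (j : ℕ) = n - 2) ∨
    ((i : ℕ) = n - 1 ∧ ((j : ℕ) = 1 ∨ (j : ℕ) = 2 ∨ (j : ℕ) = 3)))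


/-- Auxiliary orientation rule: cycle edges forward, the chord `i₂j₂` backward,
everything else by index order. -/
abbrev chordDir {n : ℕ} [NeZero n] (i₂ j₂ : Fin n) (u v : Fin n) : Prop :=
  v = u + 1 ∨ (u ≠ v + 1 ∧ ((u = j₂ ∧ v = i₂) ∨ ((u : ℕ) < (v : ℕ) ∧ ¬ (u = i₂ ∧ v = j₂))))

lemma addone_val {n : ℕ} [NeZero n] (hn : 2 ≤ n) (u : Fin n) :
    ((u + 1 : Fin n) : ℕ) = if (u : ℕ) = n - 1 then 0 else (u : ℕ) + 1 := by
  have hu := u.isLt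
  have hkey : ((u + 1 : Fin n) : ℕ) = ((u : ℕ) + 1) % n := by
    rw [Fin.add_def]
    show ((u : ℕ) + ((1 : Fin n) : ℕ)) % n = _
    rw [Fin.val_one', Nat.mod_eq_of_lt (show 1 < n by omega)]
  rw [hkey]
  split_ifs with h
  · have h2 : (u : ℕ) + 1 = n := by omega
    rw [h2, Nat.mod_self]
  · exact Nat.mod_eq_of_lt (by omega)

lemma sub_val {n : ℕ} [NeZero n] (a b : Fin n) :
    ((a - b : Fin n) : ℕ) =
      if (b : ℕ) ≤ (a : ℕ) then (a : ℕ) - (b : ℕ) else (a : ℕ) + n - (b : ℕ) := by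
  have ha := a.isLt; have hb := b.isLt
  rw [Fin.sub_def]
  show (n - (b : ℕ) + (a : ℕ)) % n = _
  split_ifs with h
  · have h2 : n - (b : ℕ) + (a : ℕ) = ((a : ℕ) - (b : ℕ)) + n := by omega
    rw [h2, Nat.add_mod_right, Nat.mod_eq_of_lt (by omega)]
  · rw [Nat.mod_eq_of_lt (by omega)]; omega

lemma relpow_trans {V : Type*} {R : V → V → Prop} :
    ∀ {a : ℕ} {u w : V}, RelPow R a u w → ∀ {b : ℕ} {v : V}, RelPow R b w v →
      RelPow R (a + b) u v := by
  intro a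
  induction a with
  | zero =>
    intro u w h b v h2
    have h' : u = w := h
    subst h'
    simpa using h2
  | succ a ih =>
    rintro u w ⟨z, hz, hzw⟩ b v h2
    have : a + 1 + b = (a + b) + 1 := by omega
    rw [this]
    exact ⟨z, hz, ih hzw h2⟩

lemma eq_addone_iff {n : ℕ} [NeZero n] (hn : 2 ≤ n) (a b : Fin n) :
    a = b + 1 ↔ (((b : ℕ) + 1 = n ∧ (a : ℕ) = 0) ∨ ((a : ℕ) = (b : ℕ) + 1)) := by
  have ha := a.isLt; have hb := b.isLt
  rw [Fin.ext_iff, addone_val hn]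
  split_ifs with h <;> omega

lemma chordDir_antisymm {n : ℕ} [NeZero n] (hn : 5 ≤ n) (i₂ j₂ : Fin n)
    (hlt : (i₂ : ℕ) < (j₂ : ℕ)) (hc1 : j₂ ≠ i₂ + 1) (hc2 : i₂ ≠ j₂ + 1)
    {u v : Fin n} (huv : u ≠ v) : chordDir i₂ j₂ u v ↔ ¬ chordDir i₂ j₂ v u := by
  have hn2 : 2 ≤ n := by omega
  have hu := u.isLt; have hv := v.isLt; have hi := i₂.isLt; have hj := j₂.isLt
  have huv' : (u : ℕ) ≠ (v : ℕ) := fun h => huv (Fin.ext h)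
  have hc1' : (j₂ : ℕ) ≠ (i₂ : ℕ) + 1 := by
    intro h
    exact hc1 ((eq_addone_iff hn2 j₂ i₂).mpr (Or.inr h))
  have hc2' : ¬ ((i₂ : ℕ) = 0 ∧ (j₂ : ℕ) + 1 = n) := by
    rintro ⟨h0, h1⟩
    exact hc2 ((eq_addone_iff hn2 i₂ j₂).mpr (Or.inl ⟨h1, h0⟩))
  clear hc1 hc2 huv
  simp only [chordDir, Ne, eq_addone_iff hn2, Fin.ext_iff]
  omega

theorem stmt_11 (n : ℕ) [NeZero n] (hn : 5 ≤ n) (G : SimpleGraph (Fin n))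
    (hcycle : ∀ k : Fin n, G.Adj k (k + 1))
    (i₁ i₂ i₃ j₁ j₂ j₃ : Fin n)
    (h1 : (i₁ : ℕ) < (i₂ : ℕ)) (h2 : (i₂ : ℕ) < (i₃ : ℕ)) (h3 : (i₃ : ℕ) < (j₁ : ℕ))
    (h4 : (j₁ : ℕ) < (j₂ : ℕ)) (h5 : (j₂ : ℕ) < (j₃ : ℕ))
    (hf1 : G.Adj i₁ j₁) (hf2 : G.Adj i₂ j₂) (hf3 : G.Adj i₃ j₃)
    (hchord1 : j₁ ≠ i₁ + 1 ∧ i₁ ≠ j₁ + 1)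
    (hchord2 : j₂ ≠ i₂ + 1 ∧ i₂ ≠ j₂ + 1)
    (hchord3 : j₃ ≠ i₃ + 1 ∧ i₃ ≠ j₃ + 1) :
    ∃ R : Fin n → Fin n → Prop, IsOrientation G R ∧ DiamLE R (n - 2) := by
  have hu5 : 2 ≤ n := by omega
  set R : Fin n → Fin n → Prop := fun u v => G.Adj u v ∧ chordDir i₂ j₂ u v with hR
  have hI := i₁.isLt; have hI2 := i₂.isLt; have hI3 := i₃.isLt
  have hJ := j₁.isLt; have hJ2 := j₂.isLt; have hJ3 := j₃.isLt
  -- gaps of chords 1 and 3 are at least 2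
  have hgap1 : (i₁ : ℕ) + 2 ≤ (j₁ : ℕ) := by
    rcases Nat.lt_or_ge ((i₁ : ℕ) + 2) ((j₁ : ℕ) + 1) with h | h
    · omega
    · exfalso
      apply hchord1.1
      exact Fin.ext (by rw [addone_val hu5, if_neg (by omega)]; omega)
  have hgap3 : (i₃ : ℕ) + 2 ≤ (j₃ : ℕ) := by
    rcases Nat.lt_or_ge ((i₃ : ℕ) + 2) ((j₃ : ℕ) + 1) with h | h
    · omega
    · exfalso
      apply hchord3.1
      exact Fin.ext (by rw [addone_val hu5, if_neg (by omega)]; omega)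
  have hgap2 : ¬ ((i₂ : ℕ) = 0 ∧ (j₂ : ℕ) = n - 1) := by
    rintro ⟨h0, hN⟩
    exact hchord2.2 (Fin.ext (by rw [addone_val hu5, if_pos hN]; exact h0))
  -- step along the cycle
  have hstep : ∀ u : Fin n, R u (u + 1) := fun u => ⟨hcycle u, Or.inl rfl⟩
  open Fin.NatCast in
  have hwalk : ∀ (m : ℕ) (u : Fin n), RelPow R m u (u + (m : Fin n)) := by
    intro m
    induction m with
    | zero =>
      intro u
      show u = u + ((0 : ℕ) : Fin n)
      simp
    | succ m ih =>
      intro u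
      refine ⟨u + 1, hstep u, ?_⟩
      have h : u + 1 + (m : Fin n) = u + (((m + 1 : ℕ)) : Fin n) := by push_cast; abel
      rw [← h]
      exact ih (u + 1)
  have hreach : ∀ x y : Fin n, RelPow R ((y - x : Fin n) : ℕ) x y := by
    intro x y
    have h := hwalk ((y - x : Fin n) : ℕ) x
    rwa [Fin.cast_val_eq_self, show x + (y - x) = y by abel] at h
  refine ⟨R, ⟨fun u v h => h.1, ?_⟩, ?_⟩
  · intro u v hadj
    have := chordDir_antisymm hn i₂ j₂ (by omega) hchord2.1 hchord2.2 hadj.ne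
    simp only [hR]
    simp [hadj, hadj.symm, this]
  · intro u v
    set m : ℕ := ((v - u : Fin n) : ℕ) with hm
    have hmn : m < n := (v - u).isLt
    by_cases hle : m ≤ n - 2
    · exact ⟨m, hle, hreach u v⟩
    · have hm1 : m = n - 1 := by omega
      have hu := u.isLt; have hv := v.isLt
      have huv : ((u : ℕ) = 0 ∧ (v : ℕ) = n - 1) ∨ ((v : ℕ) + 1 = (u : ℕ)) := by
        have h := sub_val v u
        rw [← hm, hm1] at h
        split_ifs at h <;> omega
      have key : ∀ x y : Fin n, R x y →
          ((x - u : Fin n) : ℕ) + 1 + ((v - y : Fin n) : ℕ) ≤ n - 2 →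
          ∃ k ≤ n - 2, RelPow R k u v := by
        intro x y hxy hk
        refine ⟨_, hk, relpow_trans (relpow_trans (hreach u x) ?_) (hreach y v)⟩
        exact ⟨y, hxy, rfl⟩
      by_cases hcase1 : (u : ℕ) ≤ (i₁ : ℕ) ∨ (j₁ : ℕ) < (u : ℕ)
      · refine key i₁ j₁ ⟨hf1, Or.inr ⟨hchord1.2, Or.inr ⟨by omega, ?_⟩⟩⟩ ?_
        · rintro ⟨h, -⟩
          exact absurd (congrArg Fin.val h) (by omega)
        · rw [sub_val, sub_val]; split_ifs <;> omega
      · by_cases hcase2 : (i₂ : ℕ) < (u : ℕ) ∧ (u : ℕ) ≤ (j₂ : ℕ)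
        · refine key j₂ i₂ ⟨hf2.symm, Or.inr ⟨hchord2.1, Or.inl ⟨rfl, rfl⟩⟩⟩ ?_
          rw [sub_val, sub_val]; split_ifs <;> omega
        · push_neg at hcase1 hcase2
          refine key i₃ j₃ ⟨hf3, Or.inr ⟨hchord3.2, Or.inr ⟨by omega, ?_⟩⟩⟩ ?_
          · rintro ⟨h, -⟩
            exact absurd (congrArg Fin.val h) (by omega)
          · rw [sub_val, sub_val]; split_ifs <;> omega
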